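/- Let f and g be holomorphic functions on an open set Ω ⊆ ℂⁿ with g^{2^m} = f for some positive integer m, where f omits the value 0. Then for all z ∈ Ω, g^♯(z) ≥ (1/2^m)·f^♯(z), where h^♯(z) = max_{|v|=1} |⟨Dh(z), v̄⟩| / (1 + |h(z)|²) is the spherical derivative. -/

import Mathlib

open Filter Topology

abbrev Cn (n : ℕ) := EuclideanSpace ℂ (Fin n)

/-- Chordal (spherical) distance between two finite points of the Riemann sphere. -/
noncomputable def chordal (a b : ℂ) : ℝ :=
  dist a b / (Real.sqrt (1 + ‖a‖^2) * Real.sqrt (1 + ‖b‖^2))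

/-- Chordal distance between a finite point and ∞. -/
noncomputable def chordalInf (a : ℂ) : ℝ := 1 / Real.sqrt (1 + ‖a‖^2)

/-- Spherical derivative of a holomorphic function of several complex variables. -/
noncomputable def sphDeriv {E : Type} [NormedAddCommGroup E] [NormedSpace ℂ E]
    (f : E → ℂ) (z : E) : ℝ := ‖fderiv ℂ f z‖ / (1 + ‖f z‖^2)

/-- A family `F` of (holomorphic) functions is normal on `Ω`: every sequence from `F`
has a subsequence which converges uniformly on compact subsets of `Ω` in the spherical
metric, either to a holomorphic function or to ∞. -/
def IsNormalFamily {E : Type} [NormedAddCommGroup E] [NormedSpace ℂ E]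
    (Ω : Set E) (F : Set (E → ℂ)) : Prop :=
  ∀ s : ℕ → E → ℂ, (∀ j, s j ∈ F) →
    ∃ φ : ℕ → ℕ, StrictMono φ ∧
      ((∃ g : E → ℂ, DifferentiableOn ℂ g Ω ∧
          ∀ K, K ⊆ Ω → IsCompact K → ∀ ε > 0, ∃ N, ∀ j ≥ N, ∀ z ∈ K,
            chordal (s (φ j) z) (g z) < ε) ∨
        (∀ K, K ⊆ Ω → IsCompact K → ∀ M : ℝ, ∃ N, ∀ j ≥ N, ∀ z ∈ K, M < ‖s (φ j) z‖))

set_option maxHeartbeats 1000000 in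
/-- Spherical derivative estimate for 2^m-th roots. -/
theorem stmt4 {n : ℕ} {Ω : Set (Cn n)} (hΩ : IsOpen Ω)
    (f g : Cn n → ℂ) (hf : DifferentiableOn ℂ f Ω) (hg : DifferentiableOn ℂ g Ω)
    (m : ℕ) (hm : 0 < m) (hpow : ∀ z ∈ Ω, g z ^ (2 ^ m) = f z)
    (h0 : ∀ z ∈ Ω, f z ≠ 0) :
    ∀ z ∈ Ω, (1 / 2 ^ m : ℝ) * sphDeriv f z ≤ sphDeriv g z := by
  intro z hz
  have hzU : Ω ∈ 𝓝 z := hΩ.mem_nhds hz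
  have hgz : DifferentiableAt ℂ g z := (hg z hz).differentiableAt hzU
  set k : ℕ := 2 ^ m with hk
  have hk1 : 1 ≤ k := Nat.one_le_two_pow
  have hD : HasFDerivAt (fun w => g w ^ k) (((k : ℂ) * g z ^ (k - 1)) • fderiv ℂ g z) z := by
    exact
      (hasDerivAt_pow k (g z)).comp_hasFDerivAt z hgz.hasFDerivAt
  have hfe : f =ᶠ[𝓝 z] fun w => g w ^ k := by
    filter_upwards [hzU] with w hw using (hpow w hw).symm
  have hDf : fderiv ℂ f z = ((k : ℂ) * g z ^ (k - 1)) • fderiv ℂ g z := by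
    rw [hfe.fderiv_eq, hD.fderiv]
  have hnf : ‖fderiv ℂ f z‖ = (k : ℝ) * ‖g z‖ ^ (k - 1) * ‖fderiv ℂ g z‖ := by
    rw [hDf, norm_smul, norm_mul, norm_pow]
    simp
  have hfz : ‖f z‖ = ‖g z‖ ^ k := by rw [← hpow z hz, norm_pow]
  set a : ℝ := ‖g z‖ with haa
  set D : ℝ := ‖fderiv ℂ g z‖ with hDD
  have ha : 0 ≤ a := norm_nonneg _
  have hDn : 0 ≤ D := norm_nonneg _
  have h3 : a ^ (k + 1) = a ^ (k - 1) * a ^ 2 := by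
    rw [← pow_add]; congr 1; omega
  have h2 : a ^ (k - 1) * a ^ (k + 1) = (a ^ k) ^ 2 := by
    rw [← pow_add, ← pow_mul]; congr 1; omega
  have h1 : 0 ≤ (a ^ (k - 1) - 1) * (a ^ (k + 1) - 1) := by
    rcases le_total a 1 with h | h
    · nlinarith [pow_le_one₀ ha h (n := k - 1), pow_le_one₀ ha h (n := k + 1)]
    · nlinarith [one_le_pow₀ h (n := k - 1), one_le_pow₀ h (n := k + 1)]
  have key : a ^ (k - 1) * (1 + a ^ 2) ≤ 1 + (a ^ k) ^ 2 := by nlinarith [h1, h2, h3]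
  have hkpos : (0 : ℝ) < (k : ℝ) := by positivity
  have hp1 : (0 : ℝ) < 1 + (a ^ k) ^ 2 := by positivity
  have hp2 : (0 : ℝ) < 1 + a ^ 2 := by positivity
  unfold sphDeriv
  rw [hnf, hfz]
  have hkr : ((2 : ℝ) ^ m) = (k : ℝ) := by push_cast [hk]; ring
  rw [hkr]
  calc (1 / (k:ℝ)) * ((k:ℝ) * a ^ (k-1) * D / (1 + (a^k)^2))
        = a ^ (k-1) * D / (1 + (a^k)^2) := by field_simp
    _ ≤ D / (1 + a^2) := by
        rw [div_le_div_iff₀ hp1 hp2]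
        calc a ^ (k-1) * D * (1 + a^2) = (a ^ (k-1) * (1 + a^2)) * D := by ring
          _ ≤ (1 + (a^k)^2) * D := mul_le_mul_of_nonneg_right key hDn
          _ = D * (1 + (a^k)^2) := by ring
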